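/- Let p ⊆ [n] be a finite set of size P ≥ 2 and z : p → ℝ with Σ_{l∈p} z_l = 0. Let S be a uniformly random subset of p of fixed size s (1 ≤ s ≤ P−1). Then E[(Σ_{l∈S} z_l)²] = (s/P)·(1 − (s−1)/(P−1))·Σ_{l∈p} z_l². -/

import Mathlib

open Finset

lemma count_subsets_containing {ι : Type*} [DecidableEq ι] (p t : Finset ι)
    (ht : t ⊆ p) {s : ℕ} (hts : t.card ≤ s) :
    ((p.powersetCard s).filter (fun S => t ⊆ S)).card =
      (p.card - t.card).choose (s - t.card) := by
  rw [show (p.card - t.card).choose (s - t.card)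
      = ((p \ t).powersetCard (s - t.card)).card from by
    rw [Finset.card_powersetCard, Finset.card_sdiff_of_subset ht]]
  apply Finset.card_nbij' (fun S => S \ t) (fun T => T ∪ t)
  · intro S hS
    simp only [mem_coe, mem_filter, mem_powersetCard] at hS
    obtain ⟨⟨hSp, hScard⟩, htS⟩ := hS
    rw [mem_coe, mem_powersetCard]
    constructor
    · intro x hx
      rw [mem_sdiff] at hx ⊢
      exact ⟨hSp hx.1, hx.2⟩
    · rw [card_sdiff_of_subset htS, hScard]
  · intro T hT
    rw [mem_coe, mem_powersetCard] at hT
    obtain ⟨hTp, hTcard⟩ := hT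
    have hdisj : Disjoint T t := by
      rw [disjoint_left]
      intro a haT hat
      exact (mem_sdiff.mp (hTp haT)).2 hat
    simp only [mem_coe, mem_filter, mem_powersetCard]
    refine ⟨⟨?_, ?_⟩, subset_union_right⟩
    · exact union_subset (hTp.trans sdiff_subset) ht
    · rw [card_union_of_disjoint hdisj, hTcard, Nat.sub_add_cancel hts]
  · intro S hS
    simp only [mem_coe, mem_filter, mem_powersetCard] at hS
    exact sdiff_union_of_subset hS.2
  · intro T hT
    rw [mem_coe, mem_powersetCard] at hT
    have hdisj : Disjoint T t := by
      rw [disjoint_left]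
      intro a haT hat
      exact (mem_sdiff.mp (hT.1 haT)).2 hat
    beta_reduce
    rw [union_sdiff_right, sdiff_eq_self_of_disjoint hdisj]

theorem random_subset_second_moment
    {ι : Type*} [DecidableEq ι] (p : Finset ι) (z : ι → ℝ) (P s : ℕ)
    (hP : p.card = P) (hP2 : 2 ≤ P) (hs1 : 1 ≤ s) (hsP : s ≤ P - 1)
    (hsum : ∑ l ∈ p, z l = 0) :
    (∑ S ∈ p.powersetCard s, (∑ l ∈ S, z l) ^ 2) / (P.choose s : ℝ) =
      ((s : ℝ) / P) * (1 - ((s : ℝ) - 1) / ((P : ℝ) - 1)) * ∑ l ∈ p, z l ^ 2 := by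
  set N1 : ℕ := (P - 1).choose (s - 1) with hN1
  set N2 : ℕ := if 2 ≤ s then (P - 2).choose (s - 2) else 0 with hN2
  set A : ℝ := ∑ l ∈ p, z l ^ 2 with hA
  -- count N(i,j)
  have hcount : ∀ i ∈ p, ∀ j ∈ p,
      ((p.powersetCard s).filter (fun S => i ∈ S ∧ j ∈ S)).card =
        if i = j then N1 else N2 := by
    intro i hi j hj
    by_cases hij : i = j
    · subst hij
      simp only [if_pos rfl, and_self]
      have := count_subsets_containing p {i} (by simpa using hi)
        (s := s) (by simpa using hs1)
      simpa [hP] using this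
    · rw [if_neg hij]
      have hss : ∀ S : Finset ι, (i ∈ S ∧ j ∈ S) ↔ ({i, j} : Finset ι) ⊆ S := by
        intro S; simp [insert_subset_iff]
      by_cases h2s : 2 ≤ s
      · have hc2 : ({i, j} : Finset ι).card = 2 := by
          rw [card_insert_of_notMem (by simpa using hij), card_singleton]
        have := count_subsets_containing p {i, j}
          (by rw [insert_subset_iff]; exact ⟨hi, singleton_subset_iff.mpr hj⟩)
          (s := s) (by rw [hc2]; exact h2s)
        rw [hc2, hP] at this
        rw [hN2, if_pos h2s, ← this]
        congr 1
        ext S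
        simp only [mem_filter, hss]
      · -- s = 1, so no subset of card 1 contains both distinct i, j
        rw [hN2, if_neg h2s]
        rw [Finset.card_eq_zero, Finset.filter_eq_empty_iff]
        intro S hS
        rw [mem_powersetCard] at hS
        rintro ⟨hiS, hjS⟩
        have : s = 1 := le_antisymm (by omega) hs1
        rw [this] at hS
        obtain ⟨a, ha⟩ := Finset.card_eq_one.mp hS.2
        rw [ha] at hiS hjS
        simp only [mem_singleton] at hiS hjS
        exact hij (hiS.trans hjS.symm)
  -- expand the sum of squares
  have hexpand : ∑ S ∈ p.powersetCard s, (∑ l ∈ S, z l) ^ 2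
      = ((N1 : ℝ) - N2) * A := by
    have step1 : ∀ S ∈ p.powersetCard s, (∑ l ∈ S, z l) ^ 2
        = ∑ i ∈ p, ∑ j ∈ p, if i ∈ S ∧ j ∈ S then z i * z j else 0 := by
      intro S hS
      rw [mem_powersetCard] at hS
      have h1 : ∑ l ∈ S, z l = ∑ l ∈ p, if l ∈ S then z l else 0 := by
        rw [Finset.sum_ite_mem, Finset.inter_eq_right.mpr hS.1]
      rw [sq, h1, Finset.sum_mul_sum]
      refine Finset.sum_congr rfl fun i _ => Finset.sum_congr rfl fun j _ => ?_
      by_cases hi : i ∈ S <;> by_cases hj : j ∈ S <;> simp [hi, hj]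
    have step2 : ∀ i ∈ p, ∀ j ∈ p,
        (∑ S ∈ p.powersetCard s, if i ∈ S ∧ j ∈ S then z i * z j else 0)
          = (if i = j then (N1 : ℝ) else N2) * (z i * z j) := by
      intro i hi j hj
      rw [Finset.sum_ite, Finset.sum_const_zero, add_zero, Finset.sum_const,
        hcount i hi j hj]
      split_ifs <;> simp [nsmul_eq_mul]
    calc ∑ S ∈ p.powersetCard s, (∑ l ∈ S, z l) ^ 2
        = ∑ S ∈ p.powersetCard s, ∑ i ∈ p, ∑ j ∈ p,
            if i ∈ S ∧ j ∈ S then z i * z j else 0 := Finset.sum_congr rfl step1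
      _ = ∑ i ∈ p, ∑ j ∈ p, ∑ S ∈ p.powersetCard s,
            if i ∈ S ∧ j ∈ S then z i * z j else 0 := by
          rw [Finset.sum_comm]
          exact Finset.sum_congr rfl fun i _ => Finset.sum_comm
      _ = ∑ i ∈ p, ∑ j ∈ p, (if i = j then (N1 : ℝ) else N2) * (z i * z j) :=
          Finset.sum_congr rfl fun i hi => Finset.sum_congr rfl fun j hj => step2 i hi j hj
      _ = ∑ i ∈ p, ((N1 : ℝ) * (z i * z i)
            + ∑ j ∈ p.erase i, (N2 : ℝ) * (z i * z j)) := by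
          refine Finset.sum_congr rfl fun i hi => ?_
          rw [← Finset.add_sum_erase _ _ hi, if_pos rfl]
          congr 1
          refine Finset.sum_congr rfl fun j hj => ?_
          rw [if_neg (fun h => (Finset.mem_erase.mp hj).1 h.symm)]
      _ = ∑ i ∈ p, ((N1 : ℝ) * z i ^ 2 - (N2 : ℝ) * z i ^ 2) := by
          refine Finset.sum_congr rfl fun i hi => ?_
          rw [← Finset.mul_sum, ← Finset.mul_sum, Finset.sum_erase_eq_sub hi, hsum]
          ring
      _ = ((N1 : ℝ) - N2) * A := by
          rw [hA, Finset.mul_sum]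
          exact Finset.sum_congr rfl fun i _ => by ring
  rw [hexpand]
  -- arithmetic
  have hC : (0 : ℝ) < P.choose s := by
    exact_mod_cast Nat.choose_pos (by omega)
  have hPpos : (0 : ℝ) < P := by exact_mod_cast (by omega : 0 < P)
  have hP1 : (0 : ℝ) < (P : ℝ) - 1 := by
    have : (1 : ℝ) < P := by exact_mod_cast (by omega : 1 < P)
    linarith
  have id1 : (P : ℝ) * N1 = s * P.choose s := by
    have : P * N1 = P.choose s * s := by
      have := Nat.add_one_mul_choose_eq (P - 1) (s - 1)
      rw [hN1]
      have h1 : P - 1 + 1 = P := by omega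
      have h2 : s - 1 + 1 = s := by omega
      rw [h1, h2] at this
      exact this
    have h2 : ((P : ℝ)) * N1 = (P.choose s : ℝ) * s := by exact_mod_cast this
    linarith
  have id2 : (P : ℝ) * ((P : ℝ) - 1) * N2 = s * ((s : ℝ) - 1) * P.choose s := by
    by_cases h2s : 2 ≤ s
    · have e1 : (P - 1) * N2 = N1 * (s - 1) := by
        rw [hN2, if_pos h2s, hN1]
        have := Nat.add_one_mul_choose_eq (P - 2) (s - 2)
        have h1 : P - 2 + 1 = P - 1 := by omega
        have h2 : s - 2 + 1 = s - 1 := by omega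
        rw [h1, h2] at this
        exact this
      have e1' : ((P : ℝ) - 1) * N2 = N1 * ((s : ℝ) - 1) := by
        have c1 : ((P - 1 : ℕ) : ℝ) = (P : ℝ) - 1 := by
          push_cast [Nat.cast_sub (by omega : 1 ≤ P)]; ring
        have c2 : ((s - 1 : ℕ) : ℝ) = (s : ℝ) - 1 := by
          push_cast [Nat.cast_sub hs1]; ring
        calc ((P : ℝ) - 1) * N2 = ((P - 1 : ℕ) : ℝ) * N2 := by rw [c1]
          _ = ((N1 : ℝ)) * ((s - 1 : ℕ) : ℝ) := by exact_mod_cast congrArg Nat.cast e1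
          _ = N1 * ((s : ℝ) - 1) := by rw [c2]
      calc (P : ℝ) * ((P : ℝ) - 1) * N2 = (P : ℝ) * (((P : ℝ) - 1) * N2) := by ring
        _ = (P : ℝ) * (N1 * ((s : ℝ) - 1)) := by rw [e1']
        _ = ((P : ℝ) * N1) * ((s : ℝ) - 1) := by ring
        _ = (s * P.choose s) * ((s : ℝ) - 1) := by rw [id1]
        _ = s * ((s : ℝ) - 1) * P.choose s := by ring
    · have hs : s = 1 := by omega
      rw [hN2, if_neg h2s, hs]
      simp
  rw [div_eq_iff (ne_of_gt hC)]
  have expand : ((s : ℝ) / P) * (1 - ((s : ℝ) - 1) / ((P : ℝ) - 1)) * A * P.choose s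
      * ((P : ℝ) * ((P : ℝ) - 1)) = ((N1 : ℝ) - N2) * A * ((P : ℝ) * ((P : ℝ) - 1)) := by
    field_simp
    linear_combination A * id2 - ((P : ℝ) - 1) * A * id1
  have hne : (P : ℝ) * ((P : ℝ) - 1) ≠ 0 := by positivity
  have := mul_right_cancel₀ hne expand
  linarith [this]
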